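/- Let A, B be N×N real matrices with A semi-separable of rank ≤ s and B semi-separable of rank ≤ r. Then the product AB is semi-separable of rank ≤ r + s. -/

import Mathlib

/-- A matrix is semi-separable of rank `≤ r` if every submatrix lying wholly
strictly above the main diagonal, or wholly strictly below it, has rank `≤ r`. -/
def IsSemiSep {N : ℕ} (M : Matrix (Fin N) (Fin N) ℝ) (r : ℕ) : Prop :=
  (∀ (k l : ℕ) (row : Fin k → Fin N) (col : Fin l → Fin N),
      (∀ i j, row i < col j) →
        Matrix.rank (Matrix.of fun i j => M (row i) (col j)) ≤ r) ∧
  (∀ (k l : ℕ) (row : Fin k → Fin N) (col : Fin l → Fin N),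
      (∀ i j, col j < row i) →
        Matrix.rank (Matrix.of fun i j => M (row i) (col j)) ≤ r)

lemma myRankAddLe {m n : Type*} [Fintype m] [Fintype n]
    (A B : Matrix m n ℝ) : (A + B).rank ≤ A.rank + B.rank := by
  have h : LinearMap.range (A + B).mulVecLin ≤
      LinearMap.range A.mulVecLin ⊔ LinearMap.range B.mulVecLin := by
    rintro x ⟨v, rfl⟩
    rw [Matrix.mulVecLin_add]
    exact Submodule.add_mem_sup ⟨v, rfl⟩ ⟨v, rfl⟩
  calc (A + B).rank ≤ Module.finrank ℝ
        ↥(LinearMap.range A.mulVecLin ⊔ LinearMap.range B.mulVecLin) :=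
        Submodule.finrank_mono h
    _ ≤ A.rank + B.rank := Submodule.finrank_add_le_finrank_add_finrank _ _

lemma mySumSplit {N : ℕ} (c : Fin N) (f : Fin N → ℝ) :
    ∑ x, f x = (∑ x : Fin c.val, f ⟨x.val, x.2.trans c.2⟩) +
      ∑ x : Fin (N - c.val), f ⟨c.val + x.val, by omega⟩ := by
  have hN : c.val + (N - c.val) = N := by omega
  rw [← Fintype.sum_equiv (finCongr hN) (fun i => f (finCongr hN i)) f (fun _ => rfl),
    Fin.sum_univ_add]
  rfl

theorem stmt11 (N : ℕ) (A B : Matrix (Fin N) (Fin N) ℝ) (s r : ℕ)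
    (hA : IsSemiSep A s) (hB : IsSemiSep B r) :
    IsSemiSep (A * B) (r + s) := by
  constructor
  · intro k l row col hlt
    rcases Nat.eq_zero_or_pos l with hl | hl
    · subst hl
      calc Matrix.rank _ ≤ 0 := Matrix.rank_le_width _
        _ ≤ r + s := Nat.zero_le _
    · have : Nonempty (Fin l) := ⟨⟨0, hl⟩⟩
      obtain ⟨j0, hj0⟩ := Finite.exists_min col
      set c := col j0 with hc
      have e2mem : ∀ x : Fin (N - c.val), c.val + x.val < N := fun x => by
        have := x.2; omega
      have key : (Matrix.of fun i j => (A * B) (row i) (col j)) =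
          ((Matrix.of fun (i : Fin k) (x : Fin c.val) =>
              A (row i) ⟨x.val, x.2.trans c.2⟩) *
            (Matrix.of fun (x : Fin c.val) (j : Fin l) =>
              B ⟨x.val, x.2.trans c.2⟩ (col j))) +
          ((Matrix.of fun (i : Fin k) (x : Fin (N - c.val)) =>
              A (row i) ⟨c.val + x.val, e2mem x⟩) *
            (Matrix.of fun (x : Fin (N - c.val)) (j : Fin l) =>
              B ⟨c.val + x.val, e2mem x⟩ (col j))) := by
        ext i j
        simp only [Matrix.mul_apply, Matrix.add_apply, Matrix.of_apply]
        exact mySumSplit c _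
      rw [key]
      refine le_trans (myRankAddLe _ _) (add_le_add ?_ ?_)
      · refine le_trans (Matrix.rank_mul_le_right _ _)
          (hB.1 c.val l (fun x => ⟨x.val, x.2.trans c.2⟩) col fun x j => ?_)
        exact lt_of_lt_of_le (Fin.mk_lt_of_lt_val x.2) (hj0 j)
      · refine le_trans (Matrix.rank_mul_le_left _ _)
          (hA.1 k (N - c.val) row (fun x => ⟨c.val + x.val, e2mem x⟩) fun i x => ?_)
        exact lt_of_lt_of_le (hlt i j0) (by simp [Fin.le_def, hc])
  · intro k l row col hlt
    rcases Nat.eq_zero_or_pos k with hk | hk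
    · subst hk
      calc Matrix.rank _ ≤ 0 := Matrix.rank_le_height _
        _ ≤ r + s := Nat.zero_le _
    · have : Nonempty (Fin k) := ⟨⟨0, hk⟩⟩
      obtain ⟨i0, hi0⟩ := Finite.exists_min row
      set c := row i0 with hc
      have e2mem : ∀ x : Fin (N - c.val), c.val + x.val < N := fun x => by
        have := x.2; omega
      have key : (Matrix.of fun i j => (A * B) (row i) (col j)) =
          ((Matrix.of fun (i : Fin k) (x : Fin c.val) =>
              A (row i) ⟨x.val, x.2.trans c.2⟩) *
            (Matrix.of fun (x : Fin c.val) (j : Fin l) =>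
              B ⟨x.val, x.2.trans c.2⟩ (col j))) +
          ((Matrix.of fun (i : Fin k) (x : Fin (N - c.val)) =>
              A (row i) ⟨c.val + x.val, e2mem x⟩) *
            (Matrix.of fun (x : Fin (N - c.val)) (j : Fin l) =>
              B ⟨c.val + x.val, e2mem x⟩ (col j))) := by
        ext i j
        simp only [Matrix.mul_apply, Matrix.add_apply, Matrix.of_apply]
        exact mySumSplit c _
      rw [key]
      rw [add_comm r s]
      refine le_trans (myRankAddLe _ _) (add_le_add ?_ ?_)
      · refine le_trans (Matrix.rank_mul_le_left _ _)
          (hA.2 k c.val row (fun x => ⟨x.val, x.2.trans c.2⟩) fun i x => ?_)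
        exact lt_of_lt_of_le (Fin.mk_lt_of_lt_val x.2) (hi0 i)
      · refine le_trans (Matrix.rank_mul_le_right _ _)
          (hB.2 (N - c.val) l (fun x => ⟨c.val + x.val, e2mem x⟩) col fun x j => ?_)
        exact lt_of_lt_of_le (hlt i0 j) (by simp [Fin.le_def, hc])
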